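/- A Banach space X has the p-Dunford-Pettis relatively compact property if and only if for every Banach space Y, every bounded linear operator from X to Y is Dunford-Pettis p-convergent, if and only if X is the direct sum of two closed subspaces each having the p-Dunford-Pettis relatively compact property. -/

import Mathlib

open Filter Topology Set
open scoped ENNReal

noncomputable section

/-- A sequence in a normed space is weakly null. -/
def WeaklyNull {E : Type*} [NormedAddCommGroup E] [NormedSpace ℝ E] (x : ℕ → E) : Prop :=
  ∀ φ : E →L[ℝ] ℝ, Tendsto (fun n => φ (x n)) atTop (𝓝 0)

/-- A bounded set on which every weakly null sequence of functionals converges uniformly. -/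
def DunfordPettisSet {E : Type*} [NormedAddCommGroup E] [NormedSpace ℝ E] (K : Set E) : Prop :=
  Bornology.IsBounded K ∧ ∀ f : ℕ → (E →L[ℝ] ℝ), WeaklyNull f →
    ∀ ε > 0, ∃ N : ℕ, ∀ n ≥ N, ∀ x ∈ K, |f n x| < ε

/-- Weakly `p`-summable sequence; for `p = ∞` this means weakly null. -/
def WeaklyPSummable (p : ℝ≥0∞) {E : Type*} [NormedAddCommGroup E] [NormedSpace ℝ E]
    (x : ℕ → E) : Prop :=
  if p = ∞ then WeaklyNull x else ∀ φ : E →L[ℝ] ℝ, Memℓp (fun n => φ (x n)) p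

def NormNull {E : Type*} [NormedAddCommGroup E] (x : ℕ → E) : Prop :=
  Tendsto (fun n => ‖x n‖) atTop (𝓝 0)

def PRightNull (p : ℝ≥0∞) {E : Type*} [NormedAddCommGroup E] [NormedSpace ℝ E]
    (x : ℕ → E) : Prop :=
  WeaklyPSummable p x ∧ DunfordPettisSet (Set.range x)

def WeaklyPCauchy (p : ℝ≥0∞) {E : Type*} [NormedAddCommGroup E] [NormedSpace ℝ E]
    (x : ℕ → E) : Prop :=
  ∀ k l : ℕ → ℕ, StrictMono k → StrictMono l →
    WeaklyPSummable p (fun n => x (k n) - x (l n))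

def PRightCauchy (p : ℝ≥0∞) {E : Type*} [NormedAddCommGroup E] [NormedSpace ℝ E]
    (x : ℕ → E) : Prop :=
  WeaklyPCauchy p x ∧ DunfordPettisSet (Set.range x)

/-- `p`-Dunford-Pettis relatively compact property. -/
def HasDPrcP (p : ℝ≥0∞) (E : Type*) [NormedAddCommGroup E] [NormedSpace ℝ E] : Prop :=
  ∀ x : ℕ → E, PRightNull p x → NormNull x

/-- A (not necessarily linear) map is Dunford-Pettis `p`-convergent. -/
def DPpConvergent (p : ℝ≥0∞) {E F : Type*} [NormedAddCommGroup E] [NormedSpace ℝ E]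
    [NormedAddCommGroup F] (f : E → F) : Prop :=
  ∀ x : ℕ → E, PRightNull p x → NormNull (fun n => f (x n))

/-- A map is `p`-convergent. -/
def PConvergent (p : ℝ≥0∞) {E F : Type*} [NormedAddCommGroup E] [NormedSpace ℝ E]
    [NormedAddCommGroup F] (f : E → F) : Prop :=
  ∀ x : ℕ → E, WeaklyPSummable p x → NormNull (fun n => f (x n))

/-- The adjoint of a continuous linear operator between normed spaces. -/
def opAdjoint {E F : Type*} [NormedAddCommGroup E] [NormedSpace ℝ E]
    [NormedAddCommGroup F] [NormedSpace ℝ F] (T : E →L[ℝ] F) :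
    (F →L[ℝ] ℝ) →L[ℝ] (E →L[ℝ] ℝ) :=
  (ContinuousLinearMap.compL ℝ E F ℝ).flip T


section Aux

variable {E F : Type*} [NormedAddCommGroup E] [NormedSpace ℝ E]
  [NormedAddCommGroup F] [NormedSpace ℝ F]

lemma prightNull_map (p : ℝ≥0∞) (T : E →L[ℝ] F) {x : ℕ → E}
    (hx : PRightNull p x) : PRightNull p (fun n => T (x n)) := by
  obtain ⟨hw, hb, hdp⟩ := hx
  refine ⟨?_, ?_, ?_⟩
  · unfold WeaklyPSummable WeaklyNull at hw ⊢
    split_ifs at hw ⊢ with h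
    · exact fun φ => hw (φ.comp T)
    · exact fun φ => hw (φ.comp T)
  · rw [isBounded_iff_forall_norm_le] at hb ⊢
    obtain ⟨C, hC⟩ := hb
    refine ⟨‖T‖ * C, ?_⟩
    rintro _ ⟨n, rfl⟩
    calc ‖T (x n)‖ ≤ ‖T‖ * ‖x n‖ := T.le_opNorm _
      _ ≤ ‖T‖ * C := mul_le_mul_of_nonneg_left (hC _ ⟨n, rfl⟩) (norm_nonneg T)
  · intro f hf ε hε
    have hg : WeaklyNull (fun n => (f n).comp T) := by
      intro Φ
      have := hf (Φ.comp (opAdjoint T))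
      simpa [opAdjoint] using this
    obtain ⟨N, hN⟩ := hdp _ hg ε hε
    refine ⟨N, fun n hn y hy => ?_⟩
    obtain ⟨m, rfl⟩ := hy
    exact hN n hn (x m) ⟨m, rfl⟩

lemma hasDPrcP_submodule (p : ℝ≥0∞) {X : Type*} [NormedAddCommGroup X] [NormedSpace ℝ X]
    (hX : HasDPrcP p X) (Y : Submodule ℝ X) : HasDPrcP p Y := by
  intro x hx
  have h2 : PRightNull p (fun n => Y.subtypeL (x n)) := prightNull_map p Y.subtypeL hx
  have h3 := hX _ h2
  exact h3

end Aux

theorem stmt5 {X : Type*} [NormedAddCommGroup X] [NormedSpace ℝ X] [CompleteSpace X]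
    (p : ℝ≥0∞) (hp : 1 ≤ p) :
    (HasDPrcP p X ↔
      ∀ (Y : Type) (_ : NormedAddCommGroup Y) (_ : NormedSpace ℝ Y) (_ : CompleteSpace Y)
        (T : X →L[ℝ] Y), DPpConvergent p T) ∧
    (HasDPrcP p X ↔
      ∃ Y Z : Submodule ℝ X, IsClosed (Y : Set X) ∧ IsClosed (Z : Set X) ∧
        IsCompl Y Z ∧ HasDPrcP p Y ∧ HasDPrcP p Z) := by

  have fwd : HasDPrcP p X → ∀ (Y : Type) (_ : NormedAddCommGroup Y) (_ : NormedSpace ℝ Y)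
      (_ : CompleteSpace Y) (T : X →L[ℝ] Y), DPpConvergent p T := by
    intro hX Y _ _ _ T x hx
    have h1 := hX x hx
    refine squeeze_zero (fun n => norm_nonneg _) (fun n => T.le_opNorm (x n)) ?_
    simpa using h1.const_mul ‖T‖
  have bwd : (∀ (Y : Type) (_ : NormedAddCommGroup Y) (_ : NormedSpace ℝ Y)
      (_ : CompleteSpace Y) (T : X →L[ℝ] Y), DPpConvergent p T) → HasDPrcP p X := by
    intro h x hx
    have hφ : ∀ n : ℕ, ∃ g : X →L[ℝ] ℝ, ‖g‖ ≤ 1 ∧ g (x n) = ‖x n‖ := fun n =>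
      exists_dual_vector'' ℝ (x n)
    choose φ hφ1 hφ2 using hφ
    have hbd : ∀ z : X, ∀ n : ℕ, ‖φ n z‖ ≤ ‖z‖ := fun z n =>
      le_trans ((φ n).le_opNorm z) (by
        calc ‖φ n‖ * ‖z‖ ≤ 1 * ‖z‖ := mul_le_mul_of_nonneg_right (hφ1 n) (norm_nonneg z)
          _ = ‖z‖ := one_mul _)
    let T : X →L[ℝ] (BoundedContinuousFunction ℕ ℝ) := LinearMap.mkContinuous
      { toFun := fun z => BoundedContinuousFunction.ofNormedAddCommGroupDiscrete
          (fun n => φ n z) ‖z‖ (hbd z)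
        map_add' := fun z w => by
          ext n
          simp [BoundedContinuousFunction.coe_ofNormedAddCommGroupDiscrete]
        map_smul' := fun c z => by
          ext n
          simp [BoundedContinuousFunction.coe_ofNormedAddCommGroupDiscrete] }
      1 (fun z => by
        simpa [BoundedContinuousFunction.ofNormedAddCommGroupDiscrete] using BoundedContinuousFunction.norm_ofNormedAddCommGroup_le
          continuous_of_discreteTopology (norm_nonneg z) (hbd z))
    have hT := h (BoundedContinuousFunction ℕ ℝ) inferInstance inferInstance inferInstance T x hx
    refine squeeze_zero (fun n => norm_nonneg _) (fun n => ?_) hT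
    have h1 : (T (x n)) n = ‖x n‖ := hφ2 n
    have h2 : ‖(T (x n)) n‖ ≤ ‖T (x n)‖ :=
      BoundedContinuousFunction.norm_coe_le_norm _ n
    rw [h1] at h2
    simpa [Real.norm_eq_abs, abs_of_nonneg (norm_nonneg (x n))] using h2
  constructor
  · exact ⟨fwd, bwd⟩
  constructor
  · intro hX
    refine ⟨⊤, ⊥, ?_, ?_, isCompl_top_bot, hasDPrcP_submodule p hX ⊤, ?_⟩
    · simpa using isClosed_univ
    · simpa using isClosed_singleton (x := (0 : X))
    · intro x hx
      have : ∀ n, ‖x n‖ = 0 := by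
        intro n
        have hxn : ((x n : X)) = 0 := (Submodule.mem_bot ℝ).mp (x n).2
        have : ‖x n‖ = ‖(x n : X)‖ := rfl
        rw [this, hxn, norm_zero]
      unfold NormNull
      simp only [this]
      exact tendsto_const_nhds
  · rintro ⟨Y, Z, hYc, hZc, hcompl, hY, hZ⟩ x hx
    let P := Y.linearProjOfClosedCompl Z hcompl hYc hZc
    let Q := Z.linearProjOfClosedCompl Y hcompl.symm hZc hYc
    have h1 := hY _ (prightNull_map p P hx)
    have h2 := hZ _ (prightNull_map p Q hx)
    have hdecomp : ∀ z : X, ‖z‖ ≤ ‖P z‖ + ‖Q z‖ := by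
      intro z
      have hz : ((P z : X)) + (Q z : X) = z := by
        simpa [P, Q, Submodule.coe_continuous_linearProjOfClosedCompl'] using
          Submodule.projection_add_projection_eq_self hcompl z
      calc ‖z‖ = ‖((P z : X)) + (Q z : X)‖ := by rw [hz]
        _ ≤ ‖(P z : X)‖ + ‖(Q z : X)‖ := norm_add_le _ _
    refine squeeze_zero (fun n => norm_nonneg _) (fun n => hdecomp (x n)) ?_
    simpa using h1.add h2
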